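/- arXiv:2409.00832 — 2 statements merged into one kernel-verified Lean document; each statement's English description precedes it below -/
import Mathlib

section
/- For any integers n ≥ 1, m ≥ 2, and k ≥ 1, if a solution φ on Γ_{n,m} satisfies one-person k-satisficing behavior and consistency, then for every game g ∈ Γ_{n,m} and every profile a ∈ φ(g), the profile a is a (k,…,k)-satisficing equilibrium of g. -/
namespace Solutions

/-- A game with agent set `N ⊆ Fin n` (so at most `n` agents) and action set
`A i ⊆ Fin m` (so at most `m` actions) for each agent `i ∈ N`, together with a
total preorder (preference relation) for each agent on the set of action profiles. -/
structure Game (n m : ℕ) where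
  N : Finset (Fin n)
  Nne : N.Nonempty
  A : Fin n → Finset (Fin m)
  Atwo : ∀ i ∈ N, 2 ≤ (A i).card
  pref : (i : N) → ((j : N) → A j.1) → ((j : N) → A j.1) → Prop
  total : ∀ i a b, pref i a b ∨ pref i b a
  trans : ∀ i a b c, pref i a b → pref i b c → pref i a c

variable {n m : ℕ}

/-- The set of action profiles of `g`. -/
abbrev Game.Prof (g : Game n m) := (j : g.N) → g.A j.1

/-- Strict part `≻_i` of agent `i`'s preference relation. -/
def Game.strict (g : Game n m) (i : g.N) (a b : g.Prof) : Prop :=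
  g.pref i a b ∧ ¬ g.pref i b a

/-- `rank_i(a | ⪰_i) = 1 + |{x ∈ A_i : (x, a_{-i}) ≻_i (a_i, a_{-i})}|`. -/
noncomputable def Game.rank (g : Game n m) (i : g.N) (a : g.Prof) : ℕ :=
  1 + Nat.card {x : g.A i.1 // g.strict i (Function.update a i x) a}

/-- The game has strict preferences over unilateral deviations. -/
def Game.StrictUD (g : Game n m) : Prop :=
  ∀ (i : g.N) (a : g.Prof) (x x' : g.A i.1), x ≠ x' →
    (g.strict i (Function.update a i x) (Function.update a i x') ∨
      g.strict i (Function.update a i x') (Function.update a i x))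

/-- Extend a profile of the agents in `S` to a profile of `g` by fixing every agent
`j ∉ S` to the action `a j`. -/
def Game.extend (g : Game n m) (S : Finset (Fin n)) (a : g.Prof)
    (b : (j : S) → g.A j.1) : g.Prof :=
  fun j => if h : j.1 ∈ S then b ⟨j.1, h⟩ else a j

/-- The reduced game `g^{S,a}`: agents in `S` play the residual game obtained from
`g` by fixing each agent `j ∈ N ∖ S` to the action `a j`. -/
def Game.sub (g : Game n m) (S : Finset (Fin n)) (hne : S.Nonempty) (hS : S ⊆ g.N)
    (a : g.Prof) : Game n m where
  N := S
  Nne := hne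
  A := g.A
  Atwo := fun i hi => g.Atwo i (hS hi)
  pref := fun i b b' => g.pref ⟨i.1, hS i.2⟩ (g.extend S a b) (g.extend S a b')
  total := fun i b b' => g.total ⟨i.1, hS i.2⟩ _ _
  trans := fun i b b' b'' h h' => g.trans ⟨i.1, hS i.2⟩ _ _ _ h h'

/-- The restriction `a_S` of a profile `a` of `g` to the agents in `S`. -/
def Game.restrict (g : Game n m) (S : Finset (Fin n)) (hS : S ⊆ g.N) (a : g.Prof) :
    (j : S) → g.A j.1 :=
  fun j => a ⟨j.1, hS j.2⟩

/-- The set of `(k,…,k)`-satisficing equilibria of `g`. -/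
def SAT (k : ℕ) (g : Game n m) : Set g.Prof := {a | ∀ i : g.N, g.rank i a ≤ k}

/-- One-person `k`-satisficing behavior: in every single-agent game (in `Γ_{n,m}`,
i.e. with strict unilateral deviations), the solution is the set of profiles at
which the agent is `k`-satisficed. -/
def OnePersonSat (k : ℕ) (φ : (g : Game n m) → Set g.Prof) : Prop :=
  ∀ g : Game n m, g.StrictUD → g.N.card = 1 →
    φ g = {a : g.Prof | ∀ i : g.N, g.rank i a ≤ k}

/-- Consistency: if `a` is in the solution of `g`, then for every nonempty proper
subset `S` of the agents, `a_S` is in the solution of `g^{S,a}`. -/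
def Consistent (φ : (g : Game n m) → Set g.Prof) : Prop :=
  ∀ g : Game n m, g.StrictUD → ∀ a ∈ φ g,
    ∀ (S : Finset (Fin n)) (hne : S.Nonempty) (hS : S ⊆ g.N), S ≠ g.N →
      g.restrict S hS a ∈ φ (g.sub S hne hS a)

/-- Converse consistency: if (in a game with at least two agents) `a_S` is in the
solution of `g^{S,a}` for every nonempty proper subset `S` of the agents, then `a`
is in the solution of `g`. -/
def ConvConsistent (φ : (g : Game n m) → Set g.Prof) : Prop :=
  ∀ g : Game n m, g.StrictUD → 2 ≤ g.N.card → ∀ a : g.Prof,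
    (∀ (S : Finset (Fin n)) (hne : S.Nonempty) (hS : S ⊆ g.N), S ≠ g.N →
      g.restrict S hS a ∈ φ (g.sub S hne hS a)) → a ∈ φ g

lemma extend_restrict (g : Game n m) (S : Finset (Fin n)) (hS : S ⊆ g.N) (a : g.Prof) :
    g.extend S a (g.restrict S hS a) = a := by
  funext j
  unfold Game.extend Game.restrict
  by_cases h : j.1 ∈ S
  · rw [dif_pos h]
  · rw [dif_neg h]

lemma extend_update (g : Game n m) (S : Finset (Fin n)) (hS : S ⊆ g.N) (a : g.Prof)
    (b : (j : S) → g.A j.1) (j₀ : S) (x : g.A j₀.1) :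
    g.extend S a (Function.update b j₀ x) =
      Function.update (g.extend S a b) ⟨j₀.1, hS j₀.2⟩ x := by
  obtain ⟨j₀v, hj₀⟩ := j₀
  funext j
  obtain ⟨jv, hj⟩ := j
  by_cases h : jv ∈ S
  · by_cases he : jv = j₀v
    · subst he
      have hL : g.extend S a (Function.update b ⟨jv, hj₀⟩ x) ⟨jv, hj⟩ =
          Function.update b ⟨jv, hj₀⟩ x ⟨jv, hj₀⟩ := by
        simp only [Game.extend]; rw [dif_pos hj₀]
      rw [hL]
      show Function.update b ⟨jv, hj₀⟩ x ⟨jv, hj₀⟩ =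
        Function.update (g.extend S a b) ⟨jv, hS hj₀⟩ x ⟨jv, hS hj₀⟩
      rw [Function.update_self, Function.update_self]
    · have hne1 : (⟨jv, h⟩ : S) ≠ ⟨j₀v, hj₀⟩ :=
        fun hc => he (congrArg Subtype.val hc)
      have hne2 : (⟨jv, hj⟩ : g.N) ≠ ⟨j₀v, hS hj₀⟩ :=
        fun hc => he (congrArg Subtype.val hc)
      have hL : g.extend S a (Function.update b ⟨j₀v, hj₀⟩ x) ⟨jv, hj⟩ =
          Function.update b ⟨j₀v, hj₀⟩ x ⟨jv, h⟩ := by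
        simp only [Game.extend]; rw [dif_pos h]
      have hR : g.extend S a b ⟨jv, hj⟩ = b ⟨jv, h⟩ := by
        simp only [Game.extend]; rw [dif_pos h]
      rw [hL, Function.update_of_ne hne1, Function.update_of_ne hne2, hR]
  · have hne2 : (⟨jv, hj⟩ : g.N) ≠ ⟨j₀v, hS hj₀⟩ :=
      fun hc => h (by rw [show jv = j₀v from congrArg Subtype.val hc]; exact hj₀)
    have hL : g.extend S a (Function.update b ⟨j₀v, hj₀⟩ x) ⟨jv, hj⟩ = a ⟨jv, hj⟩ := by
      simp only [Game.extend]; rw [dif_neg h]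
    have hR : g.extend S a b ⟨jv, hj⟩ = a ⟨jv, hj⟩ := by
      simp only [Game.extend]; rw [dif_neg h]
    rw [hL, Function.update_of_ne hne2, hR]

/-- if a solution `φ` on `Γ_{n,m}` satisfies one-person `k`-satisficing
behavior and consistency, then every profile in `φ(g)` is a `(k,…,k)`-satisficing
equilibrium of `g`, for every `g ∈ Γ_{n,m}`. -/
theorem stmt6 (hn : 1 ≤ n) (hm : 2 ≤ m) (k : ℕ) (hk : 1 ≤ k)
    (φ : (g : Game n m) → Set g.Prof)
    (h1 : OnePersonSat k φ) (h2 : Consistent φ) :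
    ∀ g : Game n m, g.StrictUD → ∀ a ∈ φ g, a ∈ SAT k g := by
  intro g hUD a ha i
  by_cases hc : g.N.card = 1
  · rw [h1 g hUD hc] at ha
    exact ha i
  · have hS : ({i.1} : Finset (Fin n)) ⊆ g.N := by
      intro j hj
      rw [Finset.mem_singleton] at hj
      exact hj ▸ i.2
    have hSne : ({i.1} : Finset (Fin n)).Nonempty := Finset.singleton_nonempty _
    have hSne' : ({i.1} : Finset (Fin n)) ≠ g.N := by
      intro h
      exact hc (by rw [← h, Finset.card_singleton])
    have hmem := h2 g hUD a ha {i.1} hSne hS hSne'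
    have key := extend_update g {i.1} hS a
    have hUD' : (g.sub {i.1} hSne hS a).StrictUD := by
      intro j₀ b x x' hxx
      rcases hUD ⟨j₀.1, hS j₀.2⟩ (g.extend {i.1} a b) x x' hxx with h | h
      · exact Or.inl (by
          show g.strict _ (g.extend {i.1} a _) (g.extend {i.1} a _)
          convert h using 2 <;> exact key b j₀ _)
      · exact Or.inr (by
          show g.strict _ (g.extend {i.1} a _) (g.extend {i.1} a _)
          convert h using 2 <;> exact key b j₀ _)
    have hcard : (g.sub {i.1} hSne hS a).N.card = 1 := Finset.card_singleton _
    rw [h1 _ hUD' hcard] at hmem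
    have hi : i.1 ∈ ({i.1} : Finset (Fin n)) := Finset.mem_singleton_self _
    have hrank := hmem ⟨i.1, hi⟩
    have hieq : (⟨i.1, hS hi⟩ : g.N) = i := Subtype.ext rfl
    have hstrict : ∀ x : g.A i.1,
        (g.sub {i.1} hSne hS a).strict ⟨i.1, hi⟩
          (Function.update (g.restrict {i.1} hS a) ⟨i.1, hi⟩ x)
          (g.restrict {i.1} hS a) ↔ g.strict i (Function.update a i x) a := by
      intro x
      show g.strict (⟨i.1, hS hi⟩ : g.N) (g.extend {i.1} a _) (g.extend {i.1} a _) ↔ _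
      exact Iff.of_eq (congrArg₂ (g.strict (⟨i.1, hS hi⟩ : g.N))
        ((key (g.restrict {i.1} hS a) ⟨i.1, hi⟩ x).trans
          (congrArg (fun p => Function.update p (⟨i.1, hS hi⟩ : g.N) x) (extend_restrict g {i.1} hS a)))
        (extend_restrict g {i.1} hS a))
    have hrk : g.rank i a = (g.sub {i.1} hSne hS a).rank ⟨i.1, hi⟩
        (g.restrict {i.1} hS a) := by
      unfold Game.rank
      congr 1
      exact Nat.card_eq_of_bijective _
        ((Equiv.subtypeEquivRight (fun x => (hstrict x).symm)).bijective)
    rw [hrk]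
    exact hrank

end Solutions
end

section
/- Let G be a game drawn uniformly at random from G_{n,m}, and fix S ⊆ {1,…,n}, 0 ≤ d ≤ |S|, and an integer k ≥ 1. Then c_1(d,S,k) + c_2(d,S,k) ≤ ( n + 4·Σ_{i∈S} (min{k, m_i} − 1)² ) · ( max_{1≤j≤n} m_j / ∏_{j=1}^n m_j ) · ψ(d,S,k)². -/
open scoped Classical

namespace RandomGames

/-- Action profiles of a game with agent set `Fin n` and action sets `Fin (m i)`. -/
abbrev Profile (n : ℕ) (m : Fin n → ℕ) := (i : Fin n) → Fin (m i)

/-- A game in `G_{n,m}`: agent set `Fin n`, action sets `Fin (m i)`, and each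
agent's preference relation a strict linear order (total, transitive,
antisymmetric) on the set of action profiles. -/
structure LinGame (n : ℕ) (m : Fin n → ℕ) where
  pref : Fin n → Profile n m → Profile n m → Prop
  total : ∀ i a b, pref i a b ∨ pref i b a
  trans : ∀ i a b c, pref i a b → pref i b c → pref i a c
  antisymm : ∀ i a b, pref i a b → pref i b a → a = b

variable {n : ℕ} {m : Fin n → ℕ}

/-- Strict part `≻_i` of agent `i`'s preference relation. -/
def LinGame.strict (g : LinGame n m) (i : Fin n) (a b : Profile n m) : Prop :=
  g.pref i a b ∧ ¬ g.pref i b a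

/-- `rank_i(a | ⪰_i) = 1 + |{x ∈ A_i : (x, a_{-i}) ≻_i (a_i, a_{-i})}|`. -/
noncomputable def LinGame.rank (g : LinGame n m) (i : Fin n) (a : Profile n m) : ℕ :=
  1 + Nat.card {x : Fin (m i) // g.strict i (Function.update a i x) a}

/-- The profile-condition `Q(d,S,k)` holds at `a`: the set `D` of agents that are
not 1-satisficed at `a` satisfies `D ⊆ S`, `|D| ≤ d`, and every agent in `D` is
`k`-satisficed at `a`. -/
def Qcond (g : LinGame n m) (d : ℕ) (S : Finset (Fin n)) (k : ℕ)
    (a : Profile n m) : Prop :=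
  (∀ i : Fin n, g.rank i a ≠ 1 → i ∈ S ∧ g.rank i a ≤ k) ∧
    Nat.card {i : Fin n // g.rank i a ≠ 1} ≤ d

/-- Property `P^z(d,S,k)`: `Q(d,S,k)` holds at at least `z` action profiles. -/
def Pz (z d : ℕ) (S : Finset (Fin n)) (k : ℕ) (g : LinGame n m) : Prop :=
  z ≤ Nat.card {a : Profile n m // Qcond g d S k a}

/-- `γ_{n,m}(P)`: the fraction of games in `G_{n,m}` satisfying `P`. -/
noncomputable def gamma (n : ℕ) (m : Fin n → ℕ) (P : LinGame n m → Prop) : ℝ :=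
  (Nat.card {g : LinGame n m // P g} : ℝ) / (Nat.card (LinGame n m) : ℝ)

/-- `ψ(d,S,k) = Σ_{T ⊆ S, |T| ≤ d} ∏_{i∈T} (min{k, m_i} − 1)`. -/
def psi (m : Fin n → ℕ) (d : ℕ) (S : Finset (Fin n)) (k : ℕ) : ℕ :=
  ∑ T ∈ S.powerset.filter (fun T => T.card ≤ d), ∏ i ∈ T, (min k (m i) - 1)

/-- `δ_{n,m} = (∏_i m_i) / max_i m_i`. -/
noncomputable def deltanm (n : ℕ) (m : Fin n → ℕ) : ℝ :=
  (∏ i, (m i : ℝ)) / ((Finset.univ.sup m : ℕ) : ℝ)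

/-- `Pr[Poisson(λ) ≥ z]`, the upper tail of a Poisson distribution with mean `λ`. -/
noncomputable def poissonTail (lam : ℝ) (z : ℕ) : ℝ :=
  ∑' j : ℕ, if z ≤ j then Real.exp (-lam) * lam ^ j / (Nat.factorial j) else 0

/-- `E[χ_a]`, the probability that `Q(d,S,k)` holds at `a` in a game drawn
uniformly at random from `G_{n,m}`. -/
noncomputable def Echi (n : ℕ) (m : Fin n → ℕ) (d : ℕ) (S : Finset (Fin n)) (k : ℕ)
    (a : Profile n m) : ℝ :=
  (Nat.card {g : LinGame n m // Qcond g d S k a} : ℝ) / (Nat.card (LinGame n m) : ℝ)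

/-- `E[χ_a · χ_{a'}]`, the probability that `Q(d,S,k)` holds at both `a` and `a'`
in a game drawn uniformly at random from `G_{n,m}`. -/
noncomputable def Echi2 (n : ℕ) (m : Fin n → ℕ) (d : ℕ) (S : Finset (Fin n)) (k : ℕ)
    (a a' : Profile n m) : ℝ :=
  (Nat.card {g : LinGame n m // Qcond g d S k a ∧ Qcond g d S k a'} : ℝ) /
    (Nat.card (LinGame n m) : ℝ)

/-- `a' ∈ L_a`: the profiles `a` and `a'` lie on a common line (they differ in at
most one coordinate). -/
def sameLine (a a' : Profile n m) : Prop :=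
  ∃ i : Fin n, ∀ j : Fin n, j ≠ i → a' j = a j

/-- `c_1(d,S,k) = Σ_{a} Σ_{a' ∈ L_a} E[χ_a]·E[χ_{a'}]`. -/
noncomputable def c1 (n : ℕ) (m : Fin n → ℕ) (d : ℕ) (S : Finset (Fin n)) (k : ℕ) : ℝ :=
  ∑ a : Profile n m, ∑ a' : Profile n m,
    if sameLine a a' then Echi n m d S k a * Echi n m d S k a' else 0

/-- `c_2(d,S,k) = Σ_{a} Σ_{a' ∈ L_a ∖ {a}} E[χ_a · χ_{a'}]`. -/
noncomputable def c2 (n : ℕ) (m : Fin n → ℕ) (d : ℕ) (S : Finset (Fin n)) (k : ℕ) : ℝ :=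
  ∑ a : Profile n m, ∑ a' : Profile n m,
    if sameLine a a' ∧ a ≠ a' then Echi2 n m d S k a a' else 0

-- ====== new material ======

private def lgEquiv (n : ℕ) (m : Fin n → ℕ) : LinGame n m ≃
    {p : Fin n → Profile n m → Profile n m → Prop //
      (∀ i a b, p i a b ∨ p i b a) ∧ (∀ i a b c, p i a b → p i b c → p i a c) ∧
      (∀ i a b, p i a b → p i b a → a = b)} where
  toFun g := ⟨g.pref, g.total, g.trans, g.antisymm⟩
  invFun p := ⟨p.1, p.2.1, p.2.2.1, p.2.2.2⟩
  left_inv g := rfl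
  right_inv p := rfl

noncomputable instance : Fintype (LinGame n m) := by
  classical
  letI : Fintype {p : Fin n → Profile n m → Profile n m → Prop //
      (∀ i a b, p i a b ∨ p i b a) ∧ (∀ i a b c, p i a b → p i b c → p i a c) ∧
      (∀ i a b, p i a b → p i b a → a = b)} := Subtype.fintype _
  exact Fintype.ofEquiv _ (lgEquiv n m).symm

instance : Nonempty (LinGame n m) := by
  obtain ⟨e⟩ := Fintype.truncEquivFin (Profile n m) |>.nonempty
  exact ⟨⟨fun i x y => e y ≤ e x, fun i a b => le_total _ _,
    fun i a b c h1 h2 => le_trans h2 h1,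
    fun i a b h1 h2 => e.injective (le_antisymm h2 h1)⟩⟩

theorem LinGame.ext' {g g' : LinGame n m} (h : g.pref = g'.pref) : g = g' := by
  cases g; cases g'; cases h; rfl

theorem LinGame.strict_irrefl (g : LinGame n m) (i : Fin n) (a : Profile n m) :
    ¬ g.strict i a a := fun h => h.2 h.1

theorem LinGame.strict_trans' (g : LinGame n m) {i : Fin n} {a b c : Profile n m}
    (h1 : g.strict i a b) (h2 : g.strict i b c) : g.strict i a c :=
  ⟨g.trans i a b c h1.1 h2.1, fun h => h1.2 (g.trans i b c a h2.1 h)⟩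

theorem LinGame.strict_total (g : LinGame n m) {i : Fin n} {a b : Profile n m}
    (h : a ≠ b) : g.strict i a b ∨ g.strict i b a := by
  rcases g.total i a b with h1 | h1
  · by_cases h2 : g.pref i b a
    · exact absurd (g.antisymm i a b h1 h2) h
    · exact Or.inl ⟨h1, h2⟩
  · by_cases h2 : g.pref i a b
    · exact absurd (g.antisymm i a b h2 h1) h
    · exact Or.inr ⟨h1, h2⟩

/-- The line through `a` in direction `i`. -/
def lineF (i : Fin n) (a : Profile n m) : Finset (Profile n m) :=
  Finset.univ.image (fun x : Fin (m i) => Function.update a i x)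

theorem mem_lineF {i : Fin n} {a c : Profile n m} :
    c ∈ lineF i a ↔ ∀ j, j ≠ i → c j = a j := by
  constructor
  · rintro hc j hj
    simp only [lineF, Finset.mem_image] at hc
    obtain ⟨x, _, rfl⟩ := hc
    exact Function.update_of_ne hj x a
  · intro h
    simp only [lineF, Finset.mem_image]
    refine ⟨c i, Finset.mem_univ _, ?_⟩
    funext j
    by_cases hj : j = i
    · subst hj; simp
    · rw [Function.update_of_ne hj]; exact (h j hj).symm

theorem self_mem_lineF {i : Fin n} {a : Profile n m} : a ∈ lineF i a :=
  mem_lineF.2 (fun _ _ => rfl)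

theorem update_mem_lineF {i : Fin n} {a : Profile n m} (x : Fin (m i)) :
    Function.update a i x ∈ lineF i a := by
  simp [lineF]

theorem lineF_eq_of_mem {i : Fin n} {a c : Profile n m} (hc : c ∈ lineF i a) :
    lineF i c = lineF i a := by
  ext d
  rw [mem_lineF, mem_lineF]
  rw [mem_lineF] at hc
  exact ⟨fun h j hj => (h j hj).trans (hc j hj), fun h j hj => (h j hj).trans (hc j hj).symm⟩

theorem update_injective {i : Fin n} (a : Profile n m) :
    Function.Injective (fun x : Fin (m i) => Function.update a i x) := by
  intro x y h
  have := congrFun h i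
  simpa using this

theorem card_lineF {i : Fin n} {a : Profile n m} : (lineF i a).card = m i := by
  rw [lineF, Finset.card_image_of_injective _ (update_injective a)]
  simp

/-- Rank via Finsets. -/
noncomputable def lineRank (g : LinGame n m) (i : Fin n) (a : Profile n m) : ℕ :=
  1 + ((lineF i a).filter (fun c => g.strict i c a)).card

theorem rank_eq_lineRank (g : LinGame n m) (i : Fin n) (a : Profile n m) :
    g.rank i a = lineRank g i a := by
  rw [LinGame.rank, lineRank, Nat.card_eq_fintype_card, Fintype.card_subtype]
  congr 1
  apply Finset.card_bij (fun x _ => Function.update a i x)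
  · intro x hx
    simp only [Finset.mem_filter] at hx ⊢
    exact ⟨update_mem_lineF x, hx.2⟩
  · intro x hx y hy h
    exact update_injective a h
  · intro c hc
    simp only [Finset.mem_filter] at hc
    obtain ⟨x, _, rfl⟩ := Finset.mem_image.1 hc.1
    exact ⟨x, by simp [hc.2], rfl⟩

theorem lineRank_le (g : LinGame n m) (i : Fin n) (a : Profile n m) :
    lineRank g i a ≤ m i := by
  have h1 : ((lineF i a).filter (fun c => g.strict i c a)) ⊆ (lineF i a).erase a := by
    intro c hc
    simp only [Finset.mem_filter] at hc
    exact Finset.mem_erase.2 ⟨fun h => g.strict_irrefl i a (h ▸ hc.2), hc.1⟩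
  have h2 := Finset.card_le_card h1
  rw [Finset.card_erase_of_mem self_mem_lineF, card_lineF] at h2
  have h3 : 1 ≤ m i := by
    have := card_lineF (i := i) (a := a)
    have : 0 < (lineF i a).card := Finset.card_pos.2 ⟨a, self_mem_lineF⟩
    omega
  rw [lineRank]; omega

theorem lineRank_lt_of_strict (g : LinGame n m) {i : Fin n} {a c c' : Profile n m}
    (hc : c ∈ lineF i a) (hc' : c' ∈ lineF i a) (h : g.strict i c c') :
    lineRank g i c < lineRank g i c' := by
  rw [lineRank, lineRank, lineF_eq_of_mem hc, lineF_eq_of_mem hc']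
  have hss : ((lineF i a).filter (fun y => g.strict i y c)) ⊂
      ((lineF i a).filter (fun y => g.strict i y c')) := by
    constructor
    · intro y hy
      simp only [Finset.mem_filter] at hy ⊢
      exact ⟨hy.1, g.strict_trans' hy.2 h⟩
    · intro hsub
      have hcmem : c ∈ (lineF i a).filter (fun y => g.strict i y c') :=
        Finset.mem_filter.2 ⟨hc, h⟩
      have := hsub hcmem
      simp only [Finset.mem_filter] at this
      exact g.strict_irrefl i c this.2
  have := Finset.card_lt_card hss
  omega

theorem lineRank_injOn (g : LinGame n m) {i : Fin n} {a c c' : Profile n m}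
    (hc : c ∈ lineF i a) (hc' : c' ∈ lineF i a)
    (h : lineRank g i c = lineRank g i c') : c = c' := by
  by_contra hne
  rcases g.strict_total hne with hs | hs
  · exact absurd h (Nat.ne_of_lt (lineRank_lt_of_strict g hc hc' hs))
  · exact absurd h.symm (Nat.ne_of_lt (lineRank_lt_of_strict g hc' hc hs))

theorem not_both_rank_one (g : LinGame n m) {i : Fin n} {a a' : Profile n m}
    (ha' : a' ∈ lineF i a) (hne : a' ≠ a)
    (h1 : lineRank g i a = 1) (h2 : lineRank g i a' = 1) : False := by
  rw [lineRank] at h1 h2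
  have e1 : ((lineF i a).filter (fun c => g.strict i c a)) = ∅ :=
    Finset.card_eq_zero.1 (by omega)
  have e2 : ((lineF i a').filter (fun c => g.strict i c a')) = ∅ :=
    Finset.card_eq_zero.1 (by omega)
  rcases g.strict_total hne with hs | hs
  · have : a' ∈ (lineF i a).filter (fun c => g.strict i c a) :=
      Finset.mem_filter.2 ⟨ha', hs⟩
    rw [e1] at this; exact absurd this (Finset.notMem_empty _)
  · have : a ∈ (lineF i a').filter (fun c => g.strict i c a') :=
      Finset.mem_filter.2 ⟨(lineF_eq_of_mem ha').symm ▸ self_mem_lineF, hs⟩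
    rw [e2] at this; exact absurd this (Finset.notMem_empty _)


/-- Relabel actions profiles of each agent by a bijection. -/
def relabel (g : LinGame n m) (e : Fin n → (Profile n m ≃ Profile n m)) : LinGame n m where
  pref i x y := g.pref i (e i x) (e i y)
  total i a b := g.total i _ _
  trans i a b c h1 h2 := g.trans i _ _ _ h1 h2
  antisymm i a b h1 h2 := (e i).injective (g.antisymm i _ _ h1 h2)

theorem relabel_strict (g : LinGame n m) (e : Fin n → (Profile n m ≃ Profile n m))
    (i : Fin n) (x y : Profile n m) :
    (relabel g e).strict i x y ↔ g.strict i (e i x) (e i y) := Iff.rfl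

theorem relabel_injective (e : Fin n → (Profile n m ≃ Profile n m)) :
    Function.Injective (fun g : LinGame n m => relabel g e) := by
  intro g g' h
  apply LinGame.ext'
  funext i u v
  have hh := congrArg LinGame.pref h
  have h2 : g.pref i (e i ((e i).symm u)) (e i ((e i).symm v)) =
      g'.pref i (e i ((e i).symm u)) (e i ((e i).symm v)) :=
    congrFun (congrFun (congrFun hh i) ((e i).symm u)) ((e i).symm v)
  rw [Equiv.apply_symm_apply, Equiv.apply_symm_apply] at h2
  exact h2

/-- A swap with both endpoints related to a finset the same way preserves membership. -/
theorem swap_mem_iff {α : Type*} [DecidableEq α] {u v : α} {L : Finset α}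
    (h : u ∈ L ↔ v ∈ L) (c : α) : Equiv.swap u v c ∈ L ↔ c ∈ L := by
  by_cases hc : c = u
  · subst hc; rw [Equiv.swap_apply_left]; exact h.symm
  · by_cases hc' : c = v
    · subst hc'; rw [Equiv.swap_apply_right]; exact h
    · rw [Equiv.swap_apply_of_ne_of_ne hc hc']

theorem lineRank_relabel (g : LinGame n m) (e : Fin n → (Profile n m ≃ Profile n m))
    {i : Fin n} {a c : Profile n m}
    (hpres : ∀ x, e i x ∈ lineF i a ↔ x ∈ lineF i a) (hc : c ∈ lineF i a) :
    lineRank (relabel g e) i c = lineRank g i (e i c) := by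
  have heic : e i c ∈ lineF i a := (hpres c).2 hc
  rw [lineRank, lineRank, lineF_eq_of_mem hc, lineF_eq_of_mem heic]
  congr 1
  apply Finset.card_bij (fun y _ => e i y)
  · intro y hy
    simp only [Finset.mem_filter] at hy ⊢
    exact ⟨(hpres y).2 hy.1, hy.2⟩
  · intro y _ z _ h
    exact (e i).injective h
  · intro z hz
    simp only [Finset.mem_filter] at hz
    refine ⟨(e i).symm z, ?_, ?_⟩
    · simp only [Finset.mem_filter]
      constructor
      · have := hpres ((e i).symm z)
        rw [Equiv.apply_symm_apply] at this
        exact this.1 hz.1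
      · show g.strict i (e i ((e i).symm z)) (e i c)
        rw [Equiv.apply_symm_apply]; exact hz.2
    · exact Equiv.apply_symm_apply _ _


/-- Admissible rank sets. -/
def Rset (m : Fin n → ℕ) (k : ℕ) (T : Finset (Fin n)) (i : Fin n) : Finset ℕ :=
  if i ∈ T then Finset.Icc 2 (min k (m i)) else {1}

theorem swap_line_pres {i : Fin n} (a : Profile n m) (x : Fin (m i)) (c : Profile n m) :
    Equiv.swap a (Function.update a i x) c ∈ lineF i a ↔ c ∈ lineF i a :=
  swap_mem_iff (iff_of_true self_mem_lineF (update_mem_lineF x)) c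

theorem cardA (a : Profile n m) (T : Finset (Fin n)) (k : ℕ) :
    Fintype.card {g : LinGame n m // ∀ i, lineRank g i a ∈ Rset m k T i} * ∏ i, m i ≤
      (∏ i, (Rset m k T i).card) * Fintype.card (LinGame n m) := by
  classical
  set ex : (∀ i, Fin (m i)) → Fin n → (Profile n m ≃ Profile n m) :=
    fun x i => Equiv.swap a (Function.update a i (x i)) with hex
  have key : ∀ (g : LinGame n m) (x : ∀ i, Fin (m i)) (i : Fin n),
      lineRank (relabel g (ex x)) i (Function.update a i (x i)) = lineRank g i a := by
    intro g x i
    rw [lineRank_relabel g (ex x) (fun c => swap_line_pres a (x i) c) (update_mem_lineF (x i))]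
    rw [hex]
    simp only [Equiv.swap_apply_right]
  set F : ({g : LinGame n m // ∀ i, lineRank g i a ∈ Rset m k T i} × (∀ i, Fin (m i))) →
      ((∀ i, {r : ℕ // r ∈ Rset m k T i}) × LinGame n m) :=
    fun p => (fun i => ⟨lineRank p.1.1 i a, p.1.2 i⟩, relabel p.1.1 (ex p.2)) with hF
  have hinj : Function.Injective F := by
    rintro ⟨⟨g1, hg1⟩, x1⟩ ⟨⟨g2, hg2⟩, x2⟩ h
    have h1 : ∀ i, lineRank g1 i a = lineRank g2 i a := fun i =>
      congrArg Subtype.val (congrFun (congrArg Prod.fst h) i)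
    have h2 : relabel g1 (ex x1) = relabel g2 (ex x2) := congrArg Prod.snd h
    have hx : x1 = x2 := by
      funext i
      have e1 : lineRank (relabel g1 (ex x1)) i (Function.update a i (x1 i)) =
          lineRank (relabel g1 (ex x1)) i (Function.update a i (x2 i)) := by
        rw [key, h2, key, h1]
      have := lineRank_injOn (relabel g1 (ex x1)) (update_mem_lineF (x1 i))
        (update_mem_lineF (x2 i)) e1
      exact update_injective a this
    subst hx
    have hg : g1 = g2 := relabel_injective (ex x1) h2
    subst hg
    rfl
  have hcard := Fintype.card_le_of_injective F hinj
  rw [Fintype.card_prod, Fintype.card_prod, Fintype.card_pi, Fintype.card_pi] at hcard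
  simp only [Fintype.card_fin, Fintype.card_coe] at hcard
  exact hcard


/-- The canonical permutation moving `bx ↦ a` and `by' ↦ a'`. -/
def eMove {β : Type*} [DecidableEq β] (a a' bx by' : β) : β ≃ β :=
  (Equiv.swap a bx).trans (Equiv.swap a' ((Equiv.swap a bx) by'))

theorem eMove_spec {β : Type*} [DecidableEq β] {L L' : Finset β} {a a' bx by' : β}
    (haL : a ∈ L) (hbxL : bx ∈ L) (ha'L' : a' ∈ L') (hby'L' : by' ∈ L')
    (hLL' : L = L' ∨ Disjoint L L') (haa' : a ≠ a') (hbb : bx ≠ by') :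
    (∀ c, eMove a a' bx by' c ∈ L ↔ c ∈ L) ∧
    (∀ c, eMove a a' bx by' c ∈ L' ↔ c ∈ L') ∧
    eMove a a' bx by' bx = a ∧ eMove a a' bx by' by' = a' := by
  have hs1L : ∀ c, Equiv.swap a bx c ∈ L ↔ c ∈ L := swap_mem_iff (iff_of_true haL hbxL)
  have hs1L' : ∀ c, Equiv.swap a bx c ∈ L' ↔ c ∈ L' := by
    rcases hLL' with h | h
    · subst h; exact hs1L
    · exact swap_mem_iff (iff_of_false (Finset.disjoint_left.1 h haL)
        (Finset.disjoint_left.1 h hbxL))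
  have hc'L' : Equiv.swap a bx by' ∈ L' := (hs1L' by').2 hby'L'
  have hs2L' : ∀ c, Equiv.swap a' (Equiv.swap a bx by') c ∈ L' ↔ c ∈ L' :=
    swap_mem_iff (iff_of_true ha'L' hc'L')
  have hs2L : ∀ c, Equiv.swap a' (Equiv.swap a bx by') c ∈ L ↔ c ∈ L := by
    rcases hLL' with h | h
    · rw [h]; exact hs2L'
    · exact swap_mem_iff (iff_of_false (Finset.disjoint_right.1 h ha'L')
        (Finset.disjoint_right.1 h hc'L'))
  have hac' : a ≠ Equiv.swap a bx by' := by
    intro h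
    have h2 : Equiv.swap a bx (Equiv.swap a bx by') = by' := Equiv.swap_apply_self _ _ _
    rw [← h, Equiv.swap_apply_left] at h2
    exact hbb h2
  refine ⟨?_, ?_, ?_, ?_⟩
  · intro c
    simp only [eMove, Equiv.trans_apply]
    exact (hs2L _).trans (hs1L c)
  · intro c
    simp only [eMove, Equiv.trans_apply]
    exact (hs2L' _).trans (hs1L' c)
  · simp only [eMove, Equiv.trans_apply, Equiv.swap_apply_right]
    exact Equiv.swap_apply_of_ne_of_ne haa' hac'
  · simp only [eMove, Equiv.trans_apply]
    exact Equiv.swap_apply_right a' _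


theorem update_eq_update_of_mem {i : Fin n} {a a' : Profile n m} (ha' : a' ∈ lineF i a)
    (z : Fin (m i)) : Function.update a' i z = Function.update a i z := by
  funext j
  by_cases hj : j = i
  · subst hj; simp
  · rw [Function.update_of_ne hj, Function.update_of_ne hj]
    exact mem_lineF.1 ha' j hj

theorem apply_ne_of_lineF {i₀ : Fin n} {a a' : Profile n m} (ha' : a' ∈ lineF i₀ a)
    (hne : a' ≠ a) : a' i₀ ≠ a i₀ := by
  intro h
  apply hne
  funext j
  by_cases hj : j = i₀
  · subst hj; exact h
  · exact mem_lineF.1 ha' j hj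

theorem lineF_disjoint {i i₀ : Fin n} (hi : i ≠ i₀) {a a' : Profile n m}
    (ha' : a' ∈ lineF i₀ a) (hne : a' ≠ a) :
    Disjoint (lineF i a) (lineF i a') := by
  rw [Finset.disjoint_left]
  intro c hc hc'
  have h1 : c i₀ = a i₀ := mem_lineF.1 hc i₀ (Ne.symm hi)
  have h2 : c i₀ = a' i₀ := mem_lineF.1 hc' i₀ (Ne.symm hi)
  exact apply_ne_of_lineF ha' hne (h2 ▸ h1)

theorem cardD (i₀ : Fin n) :
    Fintype.card {p : (∀ i, Fin (m i)) × (∀ i, Fin (m i)) // p.1 i₀ ≠ p.2 i₀} =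
      (m i₀ * m i₀ - m i₀) *
        ((∏ j ∈ Finset.univ.erase i₀, m j) * (∏ j ∈ Finset.univ.erase i₀, m j)) := by
  classical
  let e : (∀ i, Fin (m i)) ≃ (Fin (m i₀) × ∀ j : {j : Fin n // j ≠ i₀}, Fin (m j)) :=
    Equiv.piSplitAt i₀ (fun i => Fin (m i))
  have he1 : ∀ f, (e f).1 = f i₀ := fun f => rfl
  let E2 : {p : (∀ i, Fin (m i)) × (∀ i, Fin (m i)) // p.1 i₀ ≠ p.2 i₀} ≃
      {q : (Fin (m i₀) × ∀ j : {j : Fin n // j ≠ i₀}, Fin (m j)) ×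
        (Fin (m i₀) × ∀ j : {j : Fin n // j ≠ i₀}, Fin (m j)) // q.1.1 ≠ q.2.1} :=
    Equiv.subtypeEquiv (Equiv.prodCongr e e) (fun p => Iff.rfl)
  let W := ∀ j : {j : Fin n // j ≠ i₀}, Fin (m j)
  let E3 : {q : (Fin (m i₀) × W) × (Fin (m i₀) × W) // q.1.1 ≠ q.2.1} ≃
      ({z : Fin (m i₀) × Fin (m i₀) // z.1 ≠ z.2} × (W × W)) :=
    { toFun := fun q => (⟨(q.1.1.1, q.1.2.1), q.2⟩, (q.1.1.2, q.1.2.2))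
      invFun := fun r => ⟨((r.1.1.1, r.2.1), (r.1.1.2, r.2.2)), r.1.2⟩
      left_inv := fun ⟨⟨⟨b1, w1⟩, ⟨b2, w2⟩⟩, h⟩ => rfl
      right_inv := fun ⟨⟨⟨b1, b2⟩, h⟩, ⟨w1, w2⟩⟩ => rfl }
  have hdiag : Fintype.card {z : Fin (m i₀) × Fin (m i₀) // z.1 = z.2} = m i₀ := by
    have : {z : Fin (m i₀) × Fin (m i₀) // z.1 = z.2} ≃ Fin (m i₀) :=
      { toFun := fun z => z.1.1
        invFun := fun w => ⟨(w, w), rfl⟩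
        left_inv := fun ⟨⟨w1, w2⟩, h⟩ => by cases h; rfl
        right_inv := fun w => rfl }
    rw [Fintype.card_congr this, Fintype.card_fin]
  have hne : Fintype.card {z : Fin (m i₀) × Fin (m i₀) // z.1 ≠ z.2} =
      m i₀ * m i₀ - m i₀ := by
    have := Fintype.card_subtype_compl (fun z : Fin (m i₀) × Fin (m i₀) => z.1 = z.2)
    rw [hdiag, Fintype.card_prod, Fintype.card_fin] at this
    exact this
  have hW : Fintype.card W = ∏ j ∈ Finset.univ.erase i₀, m j := by
    rw [Fintype.card_pi]
    simp only [Fintype.card_fin]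
    exact (Finset.prod_subtype (Finset.univ.erase i₀)
      (fun x => by simp [Finset.mem_erase]) (fun j => m j)).symm
  rw [Fintype.card_congr (E2.trans E3), Fintype.card_prod, Fintype.card_prod, hne, hW]


theorem cardB (i₀ : Fin n) (a a' : Profile n m) (ha' : a' ∈ lineF i₀ a) (hne : a' ≠ a)
    (T T' : Finset (Fin n)) (k : ℕ) :
    Fintype.card {g : LinGame n m // (∀ i, lineRank g i a ∈ Rset m k T i) ∧
        (∀ i, lineRank g i a' ∈ Rset m k T' i)} *
      ((m i₀ * m i₀ - m i₀) *
        ((∏ j ∈ Finset.univ.erase i₀, m j) * (∏ j ∈ Finset.univ.erase i₀, m j))) ≤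
      ((∏ i, (Rset m k T i).card) * (∏ i, (Rset m k T' i).card)) *
        Fintype.card (LinGame n m) := by
  classical
  set eFam : (∀ i, Fin (m i)) → (∀ i, Fin (m i)) → Fin n → (Profile n m ≃ Profile n m) :=
    fun x y i => eMove a a' (Function.update a i (x i)) (Function.update a' i (y i)) with heFam
  have hspec : ∀ (x y : ∀ i, Fin (m i)), x i₀ ≠ y i₀ → ∀ i,
      (∀ c, eFam x y i c ∈ lineF i a ↔ c ∈ lineF i a) ∧
      (∀ c, eFam x y i c ∈ lineF i a' ↔ c ∈ lineF i a') ∧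
      eFam x y i (Function.update a i (x i)) = a ∧
      eFam x y i (Function.update a' i (y i)) = a' := by
    intro x y hxy i
    refine eMove_spec self_mem_lineF (update_mem_lineF _) self_mem_lineF
      (update_mem_lineF _) ?_ (Ne.symm hne) ?_
    · by_cases hi : i = i₀
      · subst hi; exact Or.inl (lineF_eq_of_mem ha').symm
      · exact Or.inr (lineF_disjoint hi ha' hne)
    · by_cases hi : i = i₀
      · subst hi
        rw [update_eq_update_of_mem ha']
        intro h; exact hxy (update_injective a h)
      · intro h
        exact Finset.disjoint_left.1 (lineF_disjoint hi ha' hne)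
          (update_mem_lineF (x i)) (h ▸ update_mem_lineF (y i))
  have keyA : ∀ (g : LinGame n m) x y, x i₀ ≠ y i₀ → ∀ i,
      lineRank (relabel g (eFam x y)) i (Function.update a i (x i)) = lineRank g i a := by
    intro g x y hxy i
    obtain ⟨p1, _, p3, _⟩ := hspec x y hxy i
    rw [lineRank_relabel g (eFam x y) p1 (update_mem_lineF _), p3]
  have keyA' : ∀ (g : LinGame n m) x y, x i₀ ≠ y i₀ → ∀ i,
      lineRank (relabel g (eFam x y)) i (Function.update a' i (y i)) = lineRank g i a' := by
    intro g x y hxy i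
    obtain ⟨_, p2, _, p4⟩ := hspec x y hxy i
    rw [lineRank_relabel g (eFam x y) p2 (update_mem_lineF _), p4]
  set F : ({g : LinGame n m // (∀ i, lineRank g i a ∈ Rset m k T i) ∧
        (∀ i, lineRank g i a' ∈ Rset m k T' i)} ×
      {p : (∀ i, Fin (m i)) × (∀ i, Fin (m i)) // p.1 i₀ ≠ p.2 i₀}) →
      ((∀ i, {r : ℕ // r ∈ Rset m k T i}) × (∀ i, {r : ℕ // r ∈ Rset m k T' i}) ×
        LinGame n m) :=
    fun p => (fun i => ⟨lineRank p.1.1 i a, p.1.2.1 i⟩,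
      fun i => ⟨lineRank p.1.1 i a', p.1.2.2 i⟩,
      relabel p.1.1 (eFam p.2.1.1 p.2.1.2)) with hF
  have hinj : Function.Injective F := by
    rintro ⟨⟨g1, hg1⟩, ⟨⟨x1, y1⟩, hxy1⟩⟩ ⟨⟨g2, hg2⟩, ⟨⟨x2, y2⟩, hxy2⟩⟩ h
    have h1 : ∀ i, lineRank g1 i a = lineRank g2 i a := fun i =>
      congrArg Subtype.val (congrFun (congrArg Prod.fst h) i)
    have h1' : ∀ i, lineRank g1 i a' = lineRank g2 i a' := fun i =>
      congrArg Subtype.val (congrFun (congrArg Prod.fst (congrArg Prod.snd h)) i)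
    have h2 : relabel g1 (eFam x1 y1) = relabel g2 (eFam x2 y2) :=
      congrArg Prod.snd (congrArg Prod.snd h)
    have hx : x1 = x2 := by
      funext i
      have t1 := keyA g1 x1 y1 hxy1 i
      have t2 := keyA g2 x2 y2 hxy2 i
      rw [← h2] at t2
      have e1 : lineRank (relabel g1 (eFam x1 y1)) i (Function.update a i (x1 i)) =
          lineRank (relabel g1 (eFam x1 y1)) i (Function.update a i (x2 i)) := by
        rw [t1, t2, h1 i]
      exact update_injective a
        (lineRank_injOn _ (update_mem_lineF _) (update_mem_lineF _) e1)
    have hy : y1 = y2 := by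
      funext i
      have t1 := keyA' g1 x1 y1 hxy1 i
      have t2 := keyA' g2 x2 y2 hxy2 i
      rw [← h2] at t2
      have e1 : lineRank (relabel g1 (eFam x1 y1)) i (Function.update a' i (y1 i)) =
          lineRank (relabel g1 (eFam x1 y1)) i (Function.update a' i (y2 i)) := by
        rw [t1, t2, h1' i]
      exact update_injective a'
        (lineRank_injOn _ (update_mem_lineF _) (update_mem_lineF _) e1)
    subst hx; subst hy
    have hg : g1 = g2 := relabel_injective (eFam x1 y1) h2
    subst hg
    rfl
  have hcard := Fintype.card_le_of_injective F hinj
  rw [Fintype.card_prod, Fintype.card_prod, Fintype.card_prod, cardD i₀,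
    Fintype.card_pi, Fintype.card_pi] at hcard
  simp only [Fintype.card_coe] at hcard
  calc Fintype.card {g : LinGame n m // (∀ i, lineRank g i a ∈ Rset m k T i) ∧
        (∀ i, lineRank g i a' ∈ Rset m k T' i)} *
      ((m i₀ * m i₀ - m i₀) *
        ((∏ j ∈ Finset.univ.erase i₀, m j) * (∏ j ∈ Finset.univ.erase i₀, m j)))
      ≤ (∏ i, (Rset m k T i).card) * ((∏ i, (Rset m k T' i).card) *
          Fintype.card (LinGame n m)) := hcard
    _ = ((∏ i, (Rset m k T i).card) * (∏ i, (Rset m k T' i).card)) *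
        Fintype.card (LinGame n m) := by ring


theorem rank_mem_iff_one (g : LinGame n m) {k : ℕ} {T : Finset (Fin n)}
    {a : Profile n m} (hE : ∀ i, lineRank g i a ∈ Rset m k T i) (i : Fin n) :
    i ∈ T ↔ lineRank g i a ≠ 1 := by
  constructor
  · intro hi
    have := hE i
    rw [Rset, if_pos hi, Finset.mem_Icc] at this
    omega
  · intro hr
    by_contra hi
    have := hE i
    rw [Rset, if_neg hi, Finset.mem_singleton] at this
    exact hr this

theorem one_le_lineRank (g : LinGame n m) (i : Fin n) (a : Profile n m) :
    1 ≤ lineRank g i a := Nat.le_add_right 1 _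

theorem Qcond_iff_exists (g : LinGame n m) (d : ℕ) (S : Finset (Fin n)) (k : ℕ)
    (a : Profile n m) :
    Qcond g d S k a ↔ ∃ T ∈ S.powerset.filter (fun T => T.card ≤ d),
      ∀ i, lineRank g i a ∈ Rset m k T i := by
  constructor
  · rintro ⟨hq1, hq2⟩
    refine ⟨Finset.univ.filter (fun i => lineRank g i a ≠ 1), ?_, ?_⟩
    · rw [Finset.mem_filter, Finset.mem_powerset]
      refine ⟨?_, ?_⟩
      · intro i hi
        rw [Finset.mem_filter] at hi
        exact ((hq1 i (by rw [rank_eq_lineRank]; exact hi.2)).1)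
      · rw [Nat.card_eq_fintype_card, Fintype.card_subtype] at hq2
        calc (Finset.univ.filter (fun i => lineRank g i a ≠ 1)).card
            = (Finset.univ.filter (fun i => g.rank i a ≠ 1)).card := by
              congr 1; ext i; simp [rank_eq_lineRank]
          _ ≤ d := hq2
    · intro i
      rw [Rset]
      by_cases hi : i ∈ Finset.univ.filter (fun i => lineRank g i a ≠ 1)
      · rw [if_pos hi, Finset.mem_Icc]
        rw [Finset.mem_filter] at hi
        have h1 := one_le_lineRank g i a
        have h2 := (hq1 i (by rw [rank_eq_lineRank]; exact hi.2)).2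
        rw [rank_eq_lineRank] at h2
        have h3 := lineRank_le g i a
        omega
      · rw [if_neg hi, Finset.mem_singleton]
        rw [Finset.mem_filter] at hi
        push_neg at hi
        exact hi (Finset.mem_univ i)
  · rintro ⟨T, hT, hE⟩
    rw [Finset.mem_filter, Finset.mem_powerset] at hT
    constructor
    · intro i hi
      rw [rank_eq_lineRank] at hi
      have hiT : i ∈ T := (rank_mem_iff_one g hE i).2 hi
      have := hE i
      rw [Rset, if_pos hiT, Finset.mem_Icc] at this
      refine ⟨hT.1 hiT, ?_⟩
      rw [rank_eq_lineRank]
      exact le_trans this.2 (min_le_left _ _)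
    · rw [Nat.card_eq_fintype_card, Fintype.card_subtype]
      calc (Finset.univ.filter (fun i => g.rank i a ≠ 1)).card
          ≤ T.card := by
            apply Finset.card_le_card
            intro i hi
            rw [Finset.mem_filter, rank_eq_lineRank] at hi
            exact (rank_mem_iff_one g hE i).2 hi.2
        _ ≤ d := hT.2

theorem T_eq_of_events (g : LinGame n m) {k : ℕ} {T T' : Finset (Fin n)}
    {a : Profile n m} (hE : ∀ i, lineRank g i a ∈ Rset m k T i)
    (hE' : ∀ i, lineRank g i a ∈ Rset m k T' i) : T = T' := by
  ext i
  rw [rank_mem_iff_one g hE i, rank_mem_iff_one g hE' i]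

theorem cardQ_sum (d : ℕ) (S : Finset (Fin n)) (k : ℕ) (a : Profile n m) :
    (Finset.univ.filter (fun g : LinGame n m => Qcond g d S k a)).card =
      ∑ T ∈ S.powerset.filter (fun T => T.card ≤ d),
        (Finset.univ.filter
          (fun g : LinGame n m => ∀ i, lineRank g i a ∈ Rset m k T i)).card := by
  classical
  rw [← Finset.card_biUnion]
  · congr 1
    ext g
    simp only [Finset.mem_biUnion, Finset.mem_filter, Finset.mem_univ, true_and]
    rw [Qcond_iff_exists]
    simp only [Finset.mem_filter, Finset.mem_powerset]
  · intro T hT T' hT' hne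
    simp only [Function.onFun]
    rw [Finset.disjoint_left]
    intro g hg hg'
    rw [Finset.mem_filter] at hg hg'
    exact hne (T_eq_of_events g hg.2 hg'.2)

theorem cardQ2_sum (d : ℕ) (S : Finset (Fin n)) (k : ℕ) (a a' : Profile n m) :
    (Finset.univ.filter
        (fun g : LinGame n m => Qcond g d S k a ∧ Qcond g d S k a')).card =
      ∑ T ∈ S.powerset.filter (fun T => T.card ≤ d),
        ∑ T' ∈ S.powerset.filter (fun T => T.card ≤ d),
          (Finset.univ.filter (fun g : LinGame n m =>
            (∀ i, lineRank g i a ∈ Rset m k T i) ∧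
            (∀ i, lineRank g i a' ∈ Rset m k T' i))).card := by
  classical
  rw [← Finset.sum_product']
  rw [← Finset.card_biUnion]
  · congr 1
    ext g
    simp only [Finset.mem_biUnion, Finset.mem_filter, Finset.mem_univ, true_and,
      Finset.mem_product]
    rw [Qcond_iff_exists, Qcond_iff_exists]
    constructor
    · rintro ⟨⟨T, hT, hE⟩, ⟨T', hT', hE'⟩⟩
      refine ⟨(T, T'), ⟨?_, ?_⟩, hE, hE'⟩
      · simpa using hT
      · simpa using hT'
    · rintro ⟨⟨T, T'⟩, ⟨hT, hT'⟩, hE, hE'⟩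
      exact ⟨⟨T, by simpa using hT, hE⟩, ⟨T', by simpa using hT', hE'⟩⟩
  · rintro ⟨T1, T1'⟩ h1 ⟨T2, T2'⟩ h2 hne
    simp only [Function.onFun]
    rw [Finset.disjoint_left]
    intro g hg hg'
    rw [Finset.mem_filter] at hg hg'
    apply hne
    have e1 := T_eq_of_events g hg.2.1 hg'.2.1
    have e2 := T_eq_of_events g hg.2.2 hg'.2.2
    rw [Prod.mk.injEq]
    exact ⟨e1, e2⟩

theorem prod_Rset_card (k : ℕ) (T : Finset (Fin n)) :
    (∏ i, (Rset m k T i).card) = ∏ i ∈ T, (min k (m i) - 1) := by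
  have h : ∀ i : Fin n, (Rset m k T i).card =
      if i ∈ T then min k (m i) - 1 else 1 := by
    intro i
    rw [Rset]
    split_ifs
    · rw [Nat.card_Icc]; omega
    · exact Finset.card_singleton 1
  simp_rw [h]
  rw [Finset.prod_ite_mem, Finset.univ_inter]

/-- Sum of weights over admissible `T` containing `i₀`. -/
def sigmaW (m : Fin n → ℕ) (d : ℕ) (S : Finset (Fin n)) (k : ℕ) (i₀ : Fin n) : ℕ :=
  ∑ T ∈ (S.powerset.filter (fun T => T.card ≤ d)).filter (fun T => i₀ ∈ T),
    ∏ i ∈ T, (min k (m i) - 1)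

theorem sigmaW_eq_zero (d : ℕ) {S : Finset (Fin n)} (k : ℕ) {i₀ : Fin n}
    (hS : i₀ ∉ S) : sigmaW m d S k i₀ = 0 := by
  rw [sigmaW]
  convert Finset.sum_empty
  rw [Finset.eq_empty_iff_forall_notMem]
  intro T hT
  rw [Finset.mem_filter, Finset.mem_filter, Finset.mem_powerset] at hT
  exact hS (hT.1.1 hT.2)

theorem sigmaW_le (d : ℕ) (S : Finset (Fin n)) (k : ℕ) (i₀ : Fin n) :
    sigmaW m d S k i₀ ≤ (min k (m i₀) - 1) * psi m d S k := by
  classical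
  rw [sigmaW, psi]
  have step : ∀ T ∈ (S.powerset.filter (fun T => T.card ≤ d)).filter (fun T => i₀ ∈ T),
      ∏ i ∈ T, (min k (m i) - 1) =
        (min k (m i₀) - 1) * ∏ i ∈ T.erase i₀, (min k (m i) - 1) := by
    intro T hT
    rw [Finset.mem_filter] at hT
    exact (Finset.mul_prod_erase T _ hT.2).symm
  rw [Finset.sum_congr rfl step, ← Finset.mul_sum]
  apply Nat.mul_le_mul_left
  have himg : ∑ T ∈ (S.powerset.filter (fun T => T.card ≤ d)).filter (fun T => i₀ ∈ T),
      ∏ i ∈ T.erase i₀, (min k (m i) - 1) =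
      ∑ T' ∈ ((S.powerset.filter (fun T => T.card ≤ d)).filter
          (fun T => i₀ ∈ T)).image (fun T => T.erase i₀),
        ∏ i ∈ T', (min k (m i) - 1) := by
    rw [Finset.sum_image]
    intro T hT T2 hT2 hE
    rw [Finset.mem_coe, Finset.mem_filter] at hT hT2
    rw [← Finset.insert_erase hT.2, ← Finset.insert_erase hT2.2]
    exact congrArg (insert i₀) hE
  rw [himg]
  apply Finset.sum_le_sum_of_subset
  intro T' hT'
  rw [Finset.mem_image] at hT'
  obtain ⟨T, hT, rfl⟩ := hT'
  simp only [Finset.mem_filter, Finset.mem_powerset] at hT ⊢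
  exact ⟨fun i hi => hT.1.1 (Finset.mem_of_mem_erase hi),
    le_trans (Finset.card_le_card (Finset.erase_subset _ _)) hT.1.2⟩

theorem natcard_eq_filter (P : LinGame n m → Prop) [DecidablePred P] :
    (Nat.card {g : LinGame n m // P g}) = (Finset.univ.filter P).card := by
  rw [Nat.card_eq_fintype_card, Fintype.card_subtype]

theorem lingame_card_pos : 0 < Fintype.card (LinGame n m) := Fintype.card_pos

theorem Echi_le (hm : ∀ i, 2 ≤ m i) (d : ℕ) (S : Finset (Fin n)) (k : ℕ)
    (a : Profile n m) :
    Echi n m d S k a ≤ (psi m d S k : ℝ) / ((∏ i, m i : ℕ) : ℝ) := by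
  have hM : (0:ℝ) < ((∏ i, m i : ℕ) : ℝ) := by
    have : 0 < ∏ i, m i := Finset.prod_pos (fun i _ => by have := hm i; omega)
    exact_mod_cast this
  have hG : (0:ℝ) < (Nat.card (LinGame n m) : ℝ) := by
    rw [Nat.card_eq_fintype_card]
    exact_mod_cast lingame_card_pos
  rw [Echi, div_le_div_iff₀ hG hM]
  rw [natcard_eq_filter]
  have key : (Finset.univ.filter (fun g : LinGame n m => Qcond g d S k a)).card *
      (∏ i, m i) ≤ psi m d S k * Fintype.card (LinGame n m) := by
    rw [cardQ_sum, psi, Finset.sum_mul, Finset.sum_mul]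
    apply Finset.sum_le_sum
    intro T hT
    have h := cardA a T k
    rw [Fintype.card_subtype, prod_Rset_card] at h
    exact h
  rw [Nat.card_eq_fintype_card]
  exact_mod_cast key

theorem Echi2_le (hm : ∀ i, 2 ≤ m i) (d : ℕ) (S : Finset (Fin n)) (k : ℕ)
    {i₀ : Fin n} {a a' : Profile n m} (ha' : a' ∈ lineF i₀ a) (hne : a' ≠ a) :
    Echi2 n m d S k a a' ≤
      4 * (sigmaW m d S k i₀ : ℝ) * (psi m d S k : ℝ) / ((∏ i, m i : ℕ) : ℝ) ^ 2 := by
  classical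
  set F : Finset (Finset (Fin n)) := S.powerset.filter (fun T => T.card ≤ d) with hFdef
  set w : Finset (Fin n) → ℕ := fun T => ∏ i ∈ T, (min k (m i) - 1) with hwdef
  set M : ℕ := ∏ i, m i with hMdef
  set Mr : ℕ := ∏ j ∈ Finset.univ.erase i₀, m j with hMrdef
  have hMsplit : M = m i₀ * Mr := (Finset.mul_prod_erase _ _ (Finset.mem_univ i₀)).symm
  have hm0 : 2 ≤ m i₀ := hm i₀
  have hMrpos : 0 < Mr := Finset.prod_pos (fun i _ => by have := hm i; omega)
  have hMpos : 0 < M := Finset.prod_pos (fun i _ => by have := hm i; omega)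
  have hGpos : (0:ℝ) < (Fintype.card (LinGame n m) : ℝ) := by
    exact_mod_cast lingame_card_pos
  have hM2pos : (0:ℝ) < ((M:ℝ))^2 := by positivity
  have hpsiR : ∑ T ∈ F, (w T : ℝ) = (psi m d S k : ℝ) := by
    rw [psi, Nat.cast_sum]
  have hsigR : ∑ T ∈ F.filter (fun T => i₀ ∈ T), (w T : ℝ) = (sigmaW m d S k i₀ : ℝ) := by
    rw [sigmaW, Nat.cast_sum]
  -- expand Echi2 as a double sum
  have hE : Echi2 n m d S k a a' =
      ∑ T ∈ F, ∑ T' ∈ F,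
        (((Finset.univ.filter (fun g : LinGame n m =>
          (∀ i, lineRank g i a ∈ Rset m k T i) ∧
          (∀ i, lineRank g i a' ∈ Rset m k T' i))).card : ℝ) /
            (Fintype.card (LinGame n m) : ℝ)) := by
    rw [Echi2, natcard_eq_filter, Nat.card_eq_fintype_card, cardQ2_sum d S k a a']
    rw [Nat.cast_sum, Finset.sum_div]
    congr 1
    ext T
    rw [Nat.cast_sum, Finset.sum_div]
  rw [hE]
  -- per-term bound
  have key : ∀ T ∈ F, ∀ T' ∈ F,
      (((Finset.univ.filter (fun g : LinGame n m =>
          (∀ i, lineRank g i a ∈ Rset m k T i) ∧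
          (∀ i, lineRank g i a' ∈ Rset m k T' i))).card : ℝ) /
            (Fintype.card (LinGame n m) : ℝ)) ≤
        (if i₀ ∈ T then 2*(w T:ℝ)*(w T':ℝ)/(M:ℝ)^2 else 0) +
        (if i₀ ∈ T' then 2*(w T:ℝ)*(w T':ℝ)/(M:ℝ)^2 else 0) := by
    intro T _ T' _
    by_cases hor : i₀ ∈ T ∨ i₀ ∈ T'
    · -- main counting bound
      have hcount := cardB i₀ a a' ha' hne T T' k
      rw [Fintype.card_subtype, prod_Rset_card, prod_Rset_card] at hcount
      have hmm : m i₀ * m i₀ - m i₀ = m i₀ * (m i₀ - 1) := by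
        rw [Nat.mul_sub, mul_one]
      rw [hmm] at hcount
      set c := (Finset.univ.filter (fun g : LinGame n m =>
          (∀ i, lineRank g i a ∈ Rset m k T i) ∧
          (∀ i, lineRank g i a' ∈ Rset m k T' i))).card with hcdef
      have hcR : (c:ℝ) * ((m i₀ : ℝ) * ((m i₀ - 1 : ℕ):ℝ) * ((Mr:ℝ) * (Mr:ℝ))) ≤
          ((w T : ℝ) * (w T' : ℝ)) * (Fintype.card (LinGame n m) : ℝ) := by
        exact_mod_cast hcount
      have hA1 : (1:ℝ) ≤ ((m i₀ - 1 : ℕ):ℝ) := by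
        have : 1 ≤ m i₀ - 1 := by omega
        exact_mod_cast this
      have hmA : (m i₀ : ℝ) = ((m i₀ - 1 : ℕ):ℝ) + 1 := by
        have : m i₀ = (m i₀ - 1) + 1 := by omega
        exact_mod_cast this
      have hcnn : (0:ℝ) ≤ (c:ℝ) := Nat.cast_nonneg c
      have hMrR : (0:ℝ) < (Mr:ℝ) := by exact_mod_cast hMrpos
      have hbound : (c:ℝ) / (Fintype.card (LinGame n m) : ℝ) ≤
          2*(w T:ℝ)*(w T':ℝ)/(M:ℝ)^2 := by
        rw [div_le_div_iff₀ hGpos hM2pos]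
        have hMR : (M:ℝ) = (m i₀ : ℝ) * (Mr:ℝ) := by exact_mod_cast hMsplit
        rw [hMR, hmA]
        rw [hmA] at hcR
        nlinarith [hcR, hcnn, hA1, hMrR,
          mul_nonneg (mul_nonneg hcnn (by linarith : (0:ℝ) ≤ ((m i₀ - 1 : ℕ):ℝ) + 1))
            (mul_nonneg (mul_nonneg hMrR.le hMrR.le)
              (by linarith : (0:ℝ) ≤ ((m i₀ - 1 : ℕ):ℝ) - 1))]
      have hnn : (0:ℝ) ≤ 2*(w T:ℝ)*(w T':ℝ)/(M:ℝ)^2 := by positivity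
      rcases hor with h | h
      · rw [if_pos h]
        split_ifs with h2
        · linarith
        · linarith
      · rw [if_pos h]
        split_ifs with h2 <;> linarith
    · -- both miss i₀ : the event is empty
      push_neg at hor
      have hzero : (Finset.univ.filter (fun g : LinGame n m =>
          (∀ i, lineRank g i a ∈ Rset m k T i) ∧
          (∀ i, lineRank g i a' ∈ Rset m k T' i))) = ∅ := by
        rw [Finset.eq_empty_iff_forall_notMem]
        intro g hg
        rw [Finset.mem_filter] at hg
        have h1 := hg.2.1 i₀
        have h2 := hg.2.2 i₀
        rw [Rset, if_neg hor.1, Finset.mem_singleton] at h1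
        rw [Rset, if_neg hor.2, Finset.mem_singleton] at h2
        exact not_both_rank_one g ha' hne h1 h2
      rw [hzero, if_neg hor.1, if_neg hor.2]
      simp
  calc (∑ T ∈ F, ∑ T' ∈ F,
        (((Finset.univ.filter (fun g : LinGame n m =>
          (∀ i, lineRank g i a ∈ Rset m k T i) ∧
          (∀ i, lineRank g i a' ∈ Rset m k T' i))).card : ℝ) /
            (Fintype.card (LinGame n m) : ℝ)))
      ≤ ∑ T ∈ F, ∑ T' ∈ F,
          ((if i₀ ∈ T then 2*(w T:ℝ)*(w T':ℝ)/(M:ℝ)^2 else 0) +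
           (if i₀ ∈ T' then 2*(w T:ℝ)*(w T':ℝ)/(M:ℝ)^2 else 0)) := by
        apply Finset.sum_le_sum
        intro T hT
        apply Finset.sum_le_sum
        intro T' hT'
        exact key T hT T' hT'
    _ = (∑ T ∈ F, ∑ T' ∈ F, (if i₀ ∈ T then 2*(w T:ℝ)*(w T':ℝ)/(M:ℝ)^2 else 0)) +
        (∑ T ∈ F, ∑ T' ∈ F, (if i₀ ∈ T' then 2*(w T:ℝ)*(w T':ℝ)/(M:ℝ)^2 else 0)) := by
        rw [← Finset.sum_add_distrib]
        congr 1
        ext T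
        rw [← Finset.sum_add_distrib]
    _ ≤ 4 * (sigmaW m d S k i₀ : ℝ) * (psi m d S k : ℝ) / ((M:ℝ)) ^ 2 := by
        have e1 : (∑ T ∈ F, ∑ T' ∈ F,
            (if i₀ ∈ T then 2*(w T:ℝ)*(w T':ℝ)/(M:ℝ)^2 else 0)) =
            2 * (sigmaW m d S k i₀ : ℝ) * (psi m d S k : ℝ) / ((M:ℝ)) ^ 2 := by
          have step : ∀ T ∈ F, (∑ T' ∈ F,
              (if i₀ ∈ T then 2*(w T:ℝ)*(w T':ℝ)/(M:ℝ)^2 else 0)) =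
              (if i₀ ∈ T then (w T:ℝ) * (2 * (psi m d S k : ℝ)/(M:ℝ)^2) else 0) := by
            intro T _
            split_ifs with h
            · have : ∀ T' ∈ F, 2*(w T:ℝ)*(w T':ℝ)/(M:ℝ)^2 =
                  (w T':ℝ) * (2*(w T:ℝ)/(M:ℝ)^2) := fun T' _ => by ring
              rw [Finset.sum_congr rfl this, ← Finset.sum_mul, hpsiR]
              ring
            · exact Finset.sum_const_zero
          rw [Finset.sum_congr rfl step, ← Finset.sum_filter, ← Finset.sum_mul, hsigR]
          ring
        have e2 : (∑ T ∈ F, ∑ T' ∈ F,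
            (if i₀ ∈ T' then 2*(w T:ℝ)*(w T':ℝ)/(M:ℝ)^2 else 0)) =
            2 * (sigmaW m d S k i₀ : ℝ) * (psi m d S k : ℝ) / ((M:ℝ)) ^ 2 := by
          rw [Finset.sum_comm]
          have step : ∀ T' ∈ F, (∑ T ∈ F,
              (if i₀ ∈ T' then 2*(w T:ℝ)*(w T':ℝ)/(M:ℝ)^2 else 0)) =
              (if i₀ ∈ T' then (w T':ℝ) * (2 * (psi m d S k : ℝ)/(M:ℝ)^2) else 0) := by
            intro T' _
            split_ifs with h
            · have : ∀ T ∈ F, 2*(w T:ℝ)*(w T':ℝ)/(M:ℝ)^2 =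
                  (w T:ℝ) * (2*(w T':ℝ)/(M:ℝ)^2) := fun T _ => by ring
              rw [Finset.sum_congr rfl this, ← Finset.sum_mul, hpsiR]
              ring
            · exact Finset.sum_const_zero
          rw [Finset.sum_congr rfl step, ← Finset.sum_filter, ← Finset.sum_mul, hsigR]
          ring
        rw [e1, e2]
        ring_nf
        exact le_refl _

theorem Echi_nonneg (d : ℕ) (S : Finset (Fin n)) (k : ℕ) (a : Profile n m) :
    0 ≤ Echi n m d S k a := by
  rw [Echi]; positivity

theorem card_profile : Fintype.card (Profile n m) = ∏ i, m i := by
  rw [Fintype.card_pi]; simp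

theorem c1_le (hm : ∀ i, 2 ≤ m i) (d : ℕ) (S : Finset (Fin n)) (k : ℕ) :
    c1 n m d S k ≤ (n:ℝ) * ((Finset.univ.sup m : ℕ):ℝ) * (psi m d S k : ℝ)^2 /
      ((∏ i, m i : ℕ):ℝ) := by
  classical
  set M : ℕ := ∏ i, m i with hMdef
  have hMpos : 0 < M := Finset.prod_pos (fun i _ => by have := hm i; omega)
  have hMR : (0:ℝ) < (M:ℝ) := by exact_mod_cast hMpos
  set K : ℝ := ((psi m d S k : ℝ) / (M:ℝ))^2 with hKdef
  have hK0 : 0 ≤ K := by positivity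
  have hterm : ∀ a a' : Profile n m,
      (if sameLine a a' then Echi n m d S k a * Echi n m d S k a' else 0) ≤
        ∑ i₀ : Fin n, (if a' ∈ lineF i₀ a then K else 0) := by
    intro a a'
    have hnn : (0:ℝ) ≤ ∑ i₀ : Fin n, (if a' ∈ lineF i₀ a then K else 0) :=
      Finset.sum_nonneg (fun i _ => by split_ifs; exacts [hK0, le_rfl])
    split_ifs with h
    · obtain ⟨i₀, hmem⟩ := h
      have hmem' : a' ∈ lineF i₀ a := mem_lineF.2 hmem
      have h1 : Echi n m d S k a * Echi n m d S k a' ≤ K := by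
        rw [hKdef, sq]
        exact mul_le_mul (Echi_le hm d S k a) (Echi_le hm d S k a')
          (Echi_nonneg d S k a') (by positivity)
      refine le_trans h1 ?_
      have hs : (if a' ∈ lineF i₀ a then K else 0) ≤
          ∑ i : Fin n, (if a' ∈ lineF i a then K else 0) :=
        Finset.single_le_sum (f := fun i : Fin n => (if a' ∈ lineF i a then K else 0))
          (fun i _ => by
            show (0:ℝ) ≤ if a' ∈ lineF i a then K else 0
            split_ifs; exacts [hK0, le_rfl]) (Finset.mem_univ i₀)
      rwa [if_pos hmem'] at hs
    · exact hnn
  have hsup : ∀ i : Fin n, ((m i : ℕ):ℝ) ≤ ((Finset.univ.sup m : ℕ):ℝ) := by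
    intro i
    exact_mod_cast Finset.le_sup (Finset.mem_univ i)
  calc c1 n m d S k
      ≤ ∑ a : Profile n m, ∑ a' : Profile n m,
          ∑ i₀ : Fin n, (if a' ∈ lineF i₀ a then K else 0) := by
        rw [c1]
        exact Finset.sum_le_sum (fun a _ => Finset.sum_le_sum (fun a' _ => hterm a a'))
    _ = ∑ a : Profile n m, ∑ i₀ : Fin n, ((m i₀ : ℕ):ℝ) * K := by
        apply Finset.sum_congr rfl
        intro a _
        rw [Finset.sum_comm]
        apply Finset.sum_congr rfl
        intro i₀ _
        rw [Finset.sum_ite_mem, Finset.univ_inter, Finset.sum_const, card_lineF,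
          nsmul_eq_mul]
    _ ≤ ∑ a : Profile n m, ∑ i₀ : Fin n, ((Finset.univ.sup m : ℕ):ℝ) * K := by
        apply Finset.sum_le_sum
        intro a _
        exact Finset.sum_le_sum (fun i₀ _ => mul_le_mul_of_nonneg_right (hsup i₀) hK0)
    _ = (M:ℝ) * ((n:ℝ) * (((Finset.univ.sup m : ℕ):ℝ) * K)) := by
        rw [Finset.sum_const, Finset.sum_const, Finset.card_univ, Finset.card_univ,
          card_profile, Fintype.card_fin, nsmul_eq_mul, nsmul_eq_mul]
        try push_cast
        try ring
    _ = (n:ℝ) * ((Finset.univ.sup m : ℕ):ℝ) * (psi m d S k : ℝ)^2 / (M:ℝ) := by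
        rw [hKdef]
        field_simp

theorem nat_key (d : ℕ) (S : Finset (Fin n)) (k : ℕ) (i₀ : Fin n) :
    (m i₀ - 1) * sigmaW m d S k i₀ ≤
      (if i₀ ∈ S then (min k (m i₀) - 1)^2 * (Finset.univ.sup m) * psi m d S k
        else 0) := by
  by_cases hS : i₀ ∈ S
  · rw [if_pos hS]
    by_cases hz : min k (m i₀) - 1 = 0
    · have h1 := sigmaW_le (m := m) d S k i₀
      rw [hz, zero_mul, Nat.le_zero] at h1
      rw [h1, mul_zero]
      exact Nat.zero_le _
    · have h1 : 1 ≤ min k (m i₀) - 1 := by omega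
      have hmle : m i₀ ≤ Finset.univ.sup m := Finset.le_sup (Finset.mem_univ i₀)
      calc (m i₀ - 1) * sigmaW m d S k i₀
          ≤ (m i₀ - 1) * ((min k (m i₀) - 1) * psi m d S k) :=
            Nat.mul_le_mul_left _ (sigmaW_le d S k i₀)
        _ ≤ ((min k (m i₀) - 1) * Finset.univ.sup m) *
              ((min k (m i₀) - 1) * psi m d S k) := by
            apply Nat.mul_le_mul_right
            calc m i₀ - 1 ≤ Finset.univ.sup m := le_trans (Nat.sub_le _ _) hmle
              _ = 1 * Finset.univ.sup m := (one_mul _).symm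
              _ ≤ (min k (m i₀) - 1) * Finset.univ.sup m :=
                  Nat.mul_le_mul_right _ h1
        _ = (min k (m i₀) - 1)^2 * (Finset.univ.sup m) * psi m d S k := by ring
  · rw [if_neg hS, sigmaW_eq_zero d k hS, mul_zero]

theorem c2_le (hm : ∀ i, 2 ≤ m i) (d : ℕ) (S : Finset (Fin n)) (k : ℕ) :
    c2 n m d S k ≤ 4 * (∑ i ∈ S, ((min k (m i) - 1 : ℕ):ℝ)^2) *
      ((Finset.univ.sup m : ℕ):ℝ) * (psi m d S k : ℝ)^2 / ((∏ i, m i : ℕ):ℝ) := by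
  classical
  set M : ℕ := ∏ i, m i with hMdef
  have hMpos : 0 < M := Finset.prod_pos (fun i _ => by have := hm i; omega)
  have hMR : (0:ℝ) < (M:ℝ) := by exact_mod_cast hMpos
  set C : Fin n → ℝ := fun i₀ =>
    4 * (sigmaW m d S k i₀ : ℝ) * (psi m d S k : ℝ) / (M:ℝ)^2 with hCdef
  have hC0 : ∀ i₀, 0 ≤ C i₀ := fun i₀ => by rw [hCdef]; positivity
  have hterm : ∀ a a' : Profile n m,
      (if sameLine a a' ∧ a ≠ a' then Echi2 n m d S k a a' else 0) ≤
        ∑ i₀ : Fin n, (if a' ∈ (lineF i₀ a).erase a then C i₀ else 0) := by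
    intro a a'
    have hnn : (0:ℝ) ≤ ∑ i₀ : Fin n, (if a' ∈ (lineF i₀ a).erase a then C i₀ else 0) :=
      Finset.sum_nonneg (fun i _ => by split_ifs; exacts [hC0 i, le_rfl])
    split_ifs with h
    · obtain ⟨⟨i₀, hmem⟩, hne⟩ := h
      have hmem' : a' ∈ lineF i₀ a := mem_lineF.2 hmem
      have h1 : Echi2 n m d S k a a' ≤ C i₀ :=
        Echi2_le hm d S k hmem' (Ne.symm hne)
      refine le_trans h1 ?_
      have hs : (if a' ∈ (lineF i₀ a).erase a then C i₀ else 0) ≤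
          ∑ i : Fin n, (if a' ∈ (lineF i a).erase a then C i else 0) :=
        Finset.single_le_sum
          (f := fun i : Fin n => (if a' ∈ (lineF i a).erase a then C i else 0))
          (fun i _ => by
            show (0:ℝ) ≤ if a' ∈ (lineF i a).erase a then C i else 0
            split_ifs; exacts [hC0 i, le_rfl]) (Finset.mem_univ i₀)
      rwa [if_pos (Finset.mem_erase.2 ⟨Ne.symm hne, hmem'⟩)] at hs
    · exact hnn
  have hinner : ∀ (a : Profile n m) (i₀ : Fin n),
      (∑ a' : Profile n m, (if a' ∈ (lineF i₀ a).erase a then C i₀ else 0)) =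
        ((m i₀ - 1 : ℕ):ℝ) * C i₀ := by
    intro a i₀
    rw [Finset.sum_ite_mem, Finset.univ_inter, Finset.sum_const,
      Finset.card_erase_of_mem self_mem_lineF, card_lineF, nsmul_eq_mul]
  calc c2 n m d S k
      ≤ ∑ a : Profile n m, ∑ a' : Profile n m,
          ∑ i₀ : Fin n, (if a' ∈ (lineF i₀ a).erase a then C i₀ else 0) := by
        rw [c2]
        exact Finset.sum_le_sum (fun a _ => Finset.sum_le_sum (fun a' _ => hterm a a'))
    _ = ∑ a : Profile n m, ∑ i₀ : Fin n, ((m i₀ - 1 : ℕ):ℝ) * C i₀ := by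
        apply Finset.sum_congr rfl
        intro a _
        rw [Finset.sum_comm]
        exact Finset.sum_congr rfl (fun i₀ _ => hinner a i₀)
    _ ≤ ∑ a : Profile n m, ∑ i₀ : Fin n,
          (((if i₀ ∈ S then (min k (m i₀) - 1)^2 * (Finset.univ.sup m) *
            psi m d S k else 0 : ℕ)):ℝ) * (4 * (psi m d S k : ℝ) / (M:ℝ)^2) := by
        apply Finset.sum_le_sum
        intro a _
        apply Finset.sum_le_sum
        intro i₀ _
        have hkey : (((m i₀ - 1) * sigmaW m d S k i₀ : ℕ):ℝ) ≤
            (((if i₀ ∈ S then (min k (m i₀) - 1)^2 * (Finset.univ.sup m) *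
              psi m d S k else 0 : ℕ)):ℝ) := by
          exact_mod_cast nat_key d S k i₀
        calc ((m i₀ - 1 : ℕ):ℝ) * C i₀
            = (((m i₀ - 1) * sigmaW m d S k i₀ : ℕ):ℝ) *
                (4 * (psi m d S k : ℝ) / (M:ℝ)^2) := by
              rw [hCdef]
              push_cast
              ring
          _ ≤ _ := by
              apply mul_le_mul_of_nonneg_right hkey
              positivity
    _ = 4 * (∑ i ∈ S, ((min k (m i) - 1 : ℕ):ℝ)^2) *
          ((Finset.univ.sup m : ℕ):ℝ) * (psi m d S k : ℝ)^2 / (M:ℝ) := by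
        rw [Finset.sum_const, Finset.card_univ, card_profile, nsmul_eq_mul]
        have hin : ∑ i₀ : Fin n,
            (((if i₀ ∈ S then (min k (m i₀) - 1)^2 * (Finset.univ.sup m) *
              psi m d S k else 0 : ℕ)):ℝ) * (4 * (psi m d S k : ℝ) / (M:ℝ)^2) =
            ∑ i₀ : Fin n, (if i₀ ∈ S then
              ((min k (m i₀) - 1 : ℕ):ℝ)^2 * ((Finset.univ.sup m : ℕ):ℝ) *
                (psi m d S k : ℝ) * (4 * (psi m d S k : ℝ) / (M:ℝ)^2) else 0) := by
          apply Finset.sum_congr rfl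
          intro i₀ _
          split_ifs with h
          · push_cast
            ring
          · simp
        rw [hin, Finset.sum_ite_mem, Finset.univ_inter]
        have hfact : ∑ i ∈ S, ((min k (m i) - 1 : ℕ):ℝ)^2 *
              ((Finset.univ.sup m : ℕ):ℝ) * (psi m d S k : ℝ) *
              (4 * (psi m d S k : ℝ) / (M:ℝ)^2) =
            (∑ i ∈ S, ((min k (m i) - 1 : ℕ):ℝ)^2) *
              (((Finset.univ.sup m : ℕ):ℝ) * (psi m d S k : ℝ) *
                (4 * (psi m d S k : ℝ) / (M:ℝ)^2)) := by
          rw [Finset.sum_mul]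
          exact Finset.sum_congr rfl (fun i _ => by ring)
        rw [hfact]
        have hMc : ∏ i, ((m i : ℕ):ℝ) = ((M:ℕ):ℝ) := by
          rw [hMdef]; push_cast; ring
        field_simp
        rw [hMdef]
        ring

/-- `c₁(d,S,k) + c₂(d,S,k) ≤ (n + 4·Σ_{i∈S} (min{k,m_i} − 1)²) ·
(max_j m_j / ∏_j m_j) · ψ(d,S,k)²`. -/
theorem stmt15 (n : ℕ) (hn : 1 ≤ n) (m : Fin n → ℕ) (hm : ∀ i, 2 ≤ m i)
    (S : Finset (Fin n)) (d : ℕ) (hd : d ≤ S.card) (k : ℕ) (hk : 1 ≤ k) :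
    c1 n m d S k + c2 n m d S k ≤
      ((n : ℝ) + 4 * ∑ i ∈ S, ((min k (m i) - 1 : ℕ) : ℝ) ^ 2) *
        (((Finset.univ.sup m : ℕ) : ℝ) / ∏ j, (m j : ℝ)) * (psi m d S k : ℝ) ^ 2 := by
  classical
  have h1 := c1_le hm d S k
  have h2 := c2_le hm d S k
  have hMpos : 0 < ∏ i, m i := Finset.prod_pos (fun i _ => by have := hm i; omega)
  have hMR : (0:ℝ) < ((∏ i, m i : ℕ):ℝ) := by exact_mod_cast hMpos
  have hprod : ∏ j, ((m j : ℕ):ℝ) = ((∏ i, m i : ℕ):ℝ) := by push_cast; ring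
  calc c1 n m d S k + c2 n m d S k
      ≤ (n:ℝ) * ((Finset.univ.sup m : ℕ):ℝ) * (psi m d S k : ℝ)^2 /
          ((∏ i, m i : ℕ):ℝ) +
        4 * (∑ i ∈ S, ((min k (m i) - 1 : ℕ):ℝ)^2) *
          ((Finset.univ.sup m : ℕ):ℝ) * (psi m d S k : ℝ)^2 /
          ((∏ i, m i : ℕ):ℝ) := add_le_add h1 h2
    _ = ((n : ℝ) + 4 * ∑ i ∈ S, ((min k (m i) - 1 : ℕ) : ℝ) ^ 2) *
        (((Finset.univ.sup m : ℕ) : ℝ) / ∏ j, (m j : ℝ)) * (psi m d S k : ℝ) ^ 2 := by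
        rw [hprod]
        field_simp


end RandomGames
end
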